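/- If h₁ and h₂ are averaged operators with Fix(h₁) ∩ Fix(h₂) ≠ ∅, and w₁, w₂ ∈ (0,1) with w₁ + w₂ = 1, then Fix(w₁h₁ + w₂h₂) = Fix(h₁) ∩ Fix(h₂). -/

import Mathlib

open scoped RealInnerProductSpace

private lemma norm_combo_sq'' {H : Type*} [NormedAddCommGroup H] [InnerProductSpace ℝ H]
    (a b : H) (t s : ℝ) (hts : t + s = 1) :
    ‖t • a + s • b‖ ^ 2 = t * ‖a‖ ^ 2 + s * ‖b‖ ^ 2 - t * s * ‖a - b‖ ^ 2 := by
  have h1 := real_inner_self_eq_norm_sq (t • a + s • b)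
  have h2 := real_inner_self_eq_norm_sq (a - b)
  have h3 := real_inner_self_eq_norm_sq a
  have h4 := real_inner_self_eq_norm_sq b
  rw [← h1, ← h2, ← h3, ← h4]
  simp only [inner_add_left, inner_add_right, inner_sub_left, inner_sub_right,
    real_inner_smul_left, real_inner_smul_right, real_inner_comm a b]
  have : s = 1 - t := by linarith
  subst this; ring

private lemma averaged_ineq' {H : Type*} [NormedAddCommGroup H] [InnerProductSpace ℝ H]
    (h : H → H) (c : ℝ) (hc : c ∈ Set.Ioo (0:ℝ) 1) (N : H → H)
    (hN : ∀ x y : H, ‖N x - N y‖ ≤ ‖x - y‖) (hrep : ∀ x : H, h x = (1 - c) • x + c • N x)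
    (y : H) (hy : h y = y) (x : H) :
    ‖h x - y‖ ^ 2 ≤ ‖x - y‖ ^ 2 - ((1 - c) / c) * ‖x - h x‖ ^ 2 := by
  obtain ⟨hc0, hc1⟩ := hc
  have hNy : N y = y := by
    have h0 := hrep y
    rw [hy] at h0
    have : c • N y = c • y := by
      have : (1 - c) • y + c • N y = (1 - c) • y + c • y := by rw [← h0]; module
      exact add_left_cancel this
    exact smul_right_injective H (ne_of_gt hc0) this
  have hdecomp : h x - y = (1 - c) • (x - y) + c • (N x - y) := by rw [hrep x]; module
  have hxh : x - h x = c • (x - N x) := by rw [hrep x]; module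
  have hkey := norm_combo_sq'' (x - y) (N x - y) (1 - c) c (by ring)
  rw [hdecomp, hkey]
  have hdiff : x - y - (N x - y) = x - N x := by abel
  rw [hdiff]
  have hNle : ‖N x - y‖ ^ 2 ≤ ‖x - y‖ ^ 2 := by
    have := hN x y; rw [hNy] at this
    exact pow_le_pow_left₀ (norm_nonneg _) this 2
  have hnorm : ‖x - h x‖ ^ 2 = c ^ 2 * ‖x - N x‖ ^ 2 := by
    rw [hxh, norm_smul, Real.norm_eq_abs, abs_of_pos hc0, mul_pow]
  rw [hnorm]
  have heq : (1 - c) / c * (c ^ 2 * ‖x - N x‖ ^ 2) = (1 - c) * c * ‖x - N x‖ ^ 2 := by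
    field_simp
  rw [heq]
  nlinarith [sq_nonneg ‖x - N x‖]

theorem fixedPoints_convexCombination_of_averaged
    {H : Type*} [NormedAddCommGroup H] [InnerProductSpace ℝ H] [CompleteSpace H]
    (h₁ h₂ : H → H) (w₁ w₂ : ℝ) (hw₁ : w₁ ∈ Set.Ioo (0 : ℝ) 1) (hw₂ : w₂ ∈ Set.Ioo (0 : ℝ) 1)
    (hw : w₁ + w₂ = 1)
    (H₁ : ∃ c ∈ Set.Ioo (0 : ℝ) 1, ∃ N : H → H, (∀ x y : H, ‖N x - N y‖ ≤ ‖x - y‖) ∧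
      ∀ x : H, h₁ x = (1 - c) • x + c • N x)
    (H₂ : ∃ c ∈ Set.Ioo (0 : ℝ) 1, ∃ N : H → H, (∀ x y : H, ‖N x - N y‖ ≤ ‖x - y‖) ∧
      ∀ x : H, h₂ x = (1 - c) • x + c • N x)
    (hfix : (Function.fixedPoints h₁ ∩ Function.fixedPoints h₂).Nonempty) :
    Function.fixedPoints (fun x => w₁ • h₁ x + w₂ • h₂ x) =
      Function.fixedPoints h₁ ∩ Function.fixedPoints h₂ := by
  obtain ⟨c₁, hc₁, N₁, hN₁, hrep₁⟩ := H₁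
  obtain ⟨c₂, hc₂, N₂, hN₂, hrep₂⟩ := H₂
  obtain ⟨y, hy₁, hy₂⟩ := hfix

  ext x
  simp only [Set.mem_inter_iff, Function.mem_fixedPoints, Function.IsFixedPt]
  constructor
  · intro hx
    -- hx : w₁ • h₁ x + w₂ • h₂ x = x
    have ha := averaged_ineq' h₁ c₁ hc₁ N₁ hN₁ hrep₁ y hy₁ x
    have hb := averaged_ineq' h₂ c₂ hc₂ N₂ hN₂ hrep₂ y hy₂ x
    have hxy : x - y = w₁ • (h₁ x - y) + w₂ • (h₂ x - y) := by
      have : w₁ • h₁ x + w₂ • h₂ x = x := hx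
      calc x - y = (w₁ • h₁ x + w₂ • h₂ x) - (w₁ + w₂) • y := by rw [this, hw, one_smul]
        _ = w₁ • (h₁ x - y) + w₂ • (h₂ x - y) := by module
    have hkey := norm_combo_sq'' (h₁ x - y) (h₂ x - y) w₁ w₂ hw
    rw [← hxy] at hkey
    obtain ⟨hw₁0, hw₁1⟩ := hw₁
    obtain ⟨hw₂0, hw₂1⟩ := hw₂
    have hk₁ : (0:ℝ) < (1 - c₁) / c₁ := div_pos (by linarith [hc₁.2]) hc₁.1
    have hk₂ : (0:ℝ) < (1 - c₂) / c₂ := div_pos (by linarith [hc₂.2]) hc₂.1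
    have hsum : w₁ * ((1 - c₁) / c₁) * ‖x - h₁ x‖ ^ 2 ≤ 0 := by
      nlinarith [mul_le_mul_of_nonneg_left ha hw₁0.le, mul_le_mul_of_nonneg_left hb hw₂0.le,
        mul_nonneg (mul_pos hw₂0 hk₂).le (sq_nonneg ‖x - h₂ x‖),
        mul_nonneg (mul_pos hw₁0 hw₂0).le (sq_nonneg ‖h₁ x - y - (h₂ x - y)‖)]
    have h1z : ‖x - h₁ x‖ ^ 2 ≤ 0 := by
      nlinarith [mul_pos hw₁0 hk₁]
    have hfix₁ : h₁ x = x := by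
      have : x - h₁ x = 0 := by
        have := sq_nonneg ‖x - h₁ x‖
        have hn : ‖x - h₁ x‖ = 0 := by nlinarith
        exact norm_eq_zero.mp hn
      have := sub_eq_zero.mp this
      exact this.symm
    refine ⟨hfix₁, ?_⟩
    -- from hx and hfix₁ : w₁ • x + w₂ • h₂ x = x, so w₂ • (h₂ x - x) = 0
    have h0 : h₁ x - x = 0 := by rw [hfix₁, sub_self]
    have : w₂ • (h₂ x - x) = 0 := by
      have e : w₂ • (h₂ x - x) = (w₁ • h₁ x + w₂ • h₂ x) - (w₁ + w₂) • x - w₁ • (h₁ x - x) := by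
        module
      rw [e, hx, hw, one_smul, h0, smul_zero, sub_zero, sub_self]
    have := smul_eq_zero.mp this
    rcases this with h | h
    · exact absurd h (ne_of_gt hw₂0)
    · exact (sub_eq_zero.mp h)
  · rintro ⟨hx₁, hx₂⟩
    show w₁ • h₁ x + w₂ • h₂ x = x
    rw [hx₁, hx₂, ← add_smul, hw, one_smul]
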